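/- arXiv:0806.1092 — 3 statements merged into one kernel-verified Lean document; each statement's English description precedes it below -/
import Mathlib

section
/- (Deterministic Robbins–Siegmund) Let {u_k}, {v_k}, {w_k} be nonnegative real sequences and {q_k} a nonnegative sequence with ∑ q_k < ∞ and ∑ w_k < ∞. If u_{k+1} ≤ (1 + q_k) u_k - v_k + w_k for all k, then {u_k} converges and ∑ v_k < ∞. -/
open Finset Filter

/-- Deterministic Robbins–Siegmund lemma. -/
theorem deterministic_robbins_siegmund
    (u v w q : ℕ → ℝ)
    (hu : ∀ k, 0 ≤ u k) (hv : ∀ k, 0 ≤ v k) (hw : ∀ k, 0 ≤ w k) (hq : ∀ k, 0 ≤ q k)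
    (hqs : Summable q) (hws : Summable w)
    (hrec : ∀ k, u (k + 1) ≤ (1 + q k) * u k - v k + w k) :
    (∃ L : ℝ, Filter.Tendsto u Filter.atTop (nhds L)) ∧ Summable v := by
  -- product bound
  have hP : ∀ k, (∏ j ∈ range k, (1 + q j)) ≤ Real.exp (∑' k, q k) := by
    intro k
    calc ∏ j ∈ range k, (1 + q j) ≤ ∏ j ∈ range k, Real.exp (q j) := by
          apply Finset.prod_le_prod
          · intro i _; linarith [hq i]
          · intro i _; linarith [Real.add_one_le_exp (q i)]
      _ = Real.exp (∑ j ∈ range k, q j) := by rw [Real.exp_sum]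
      _ ≤ Real.exp (∑' k, q k) :=
          Real.exp_le_exp.2 (Summable.sum_le_tsum _ (fun i _ => hq i) hqs)
  -- u is bounded
  set C : ℝ := Real.exp (∑' k, q k) * (u 0 + ∑' k, w k) with hCdef
  have hub : ∀ k, u k ≤ (∏ j ∈ range k, (1 + q j)) * (u 0 + ∑ j ∈ range k, w j) := by
    intro k
    induction k with
    | zero => simp
    | succ k ih =>
      have h1 : (1:ℝ) ≤ ∏ j ∈ range (k+1), (1 + q j) := by
        have := Finset.prod_le_prod (s := range (k+1)) (f := fun _ => (1:ℝ))
          (g := fun j => 1 + q j) (fun i _ => zero_le_one) (fun i _ => by linarith [hq i])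
        simpa using this
      have hk : (0:ℝ) ≤ 1 + q k := by linarith [hq k]
      calc u (k+1) ≤ (1 + q k) * u k - v k + w k := hrec k
        _ ≤ (1 + q k) * u k + w k := by linarith [hv k]
        _ ≤ (1 + q k) * ((∏ j ∈ range k, (1+q j)) * (u 0 + ∑ j ∈ range k, w j)) + w k := by
            have := mul_le_mul_of_nonneg_left ih hk
            linarith
        _ = (∏ j ∈ range (k+1), (1+q j)) * (u 0 + ∑ j ∈ range k, w j) + w k := by
            rw [Finset.prod_range_succ]; ring
        _ ≤ (∏ j ∈ range (k+1), (1+q j)) * (u 0 + ∑ j ∈ range k, w j)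
              + (∏ j ∈ range (k+1), (1+q j)) * w k := by
            nlinarith [hw k]
        _ = (∏ j ∈ range (k+1), (1+q j)) * (u 0 + ∑ j ∈ range (k+1), w j) := by
            rw [Finset.sum_range_succ]; ring
  have huC : ∀ k, u k ≤ C := by
    intro k
    have h2 : u 0 + ∑ j ∈ range k, w j ≤ u 0 + ∑' k, w k := by
      have := Summable.sum_le_tsum (range k) (fun i _ => hw i) hws; linarith
    have h3 : (0:ℝ) ≤ u 0 + ∑ j ∈ range k, w j := by
      have := Finset.sum_nonneg (fun i (_ : i ∈ range k) => hw i)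
      linarith [hu 0]
    calc u k ≤ _ := hub k
      _ ≤ Real.exp (∑' k, q k) * (u 0 + ∑' k, w k) :=
        mul_le_mul (hP k) h2 h3 (Real.exp_pos _).le
  -- the summable perturbation
  set g : ℕ → ℝ := fun k => w k + q k * u k with hgdef
  have hgnn : ∀ k, 0 ≤ g k := fun k => add_nonneg (hw k) (mul_nonneg (hq k) (hu k))
  have hgs : Summable g := by
    apply Summable.of_nonneg_of_le hgnn (fun k => ?_) (hws.add (hqs.mul_left C))
    have : q k * u k ≤ C * q k := by
      have := mul_le_mul_of_nonneg_left (huC k) (hq k); linarith [this]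
    simpa [hgdef] using by linarith
  -- the quasi-monotone sequence
  set s : ℕ → ℝ := fun k => u k + ∑ j ∈ range k, v j - ∑ j ∈ range k, g j with hsdef
  have hanti : Antitone s := by
    apply antitone_nat_of_succ_le
    intro k
    have h := hrec k
    have hexp : (1 + q k) * u k = u k + q k * u k := by ring
    simp only [hsdef, Finset.sum_range_succ, hgdef]
    linarith
  have hbdd : BddBelow (Set.range s) := by
    refine ⟨-(∑' k, g k), ?_⟩
    rintro x ⟨k, rfl⟩
    have h1 : ∑ j ∈ range k, g j ≤ ∑' k, g k := Summable.sum_le_tsum _ (fun i _ => hgnn i) hgs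
    have h2 : (0:ℝ) ≤ ∑ j ∈ range k, v j :=
      Finset.sum_nonneg (fun i _ => hv i)
    simp only [hsdef]
    linarith [hu k]
  have hs_tendsto : Tendsto s atTop (nhds (⨅ k, s k)) := tendsto_atTop_ciInf hanti hbdd
  have hW : Tendsto (fun n => ∑ j ∈ range n, g j) atTop (nhds (∑' k, g k)) :=
    hgs.hasSum.tendsto_sum_nat
  -- t k = u k + partial sums of v converges
  have ht : Tendsto (fun k => u k + ∑ j ∈ range k, v j) atTop
      (nhds ((⨅ k, s k) + ∑' k, g k)) := by
    have := hs_tendsto.add hW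
    refine this.congr (fun k => ?_)
    simp only [hsdef]; ring
  -- Summable v
  have hvs : Summable v := by
    apply summable_of_sum_range_le hv (c := s 0 + ∑' k, g k)
    intro n
    have h1 : s n ≤ s 0 := hanti (Nat.zero_le n)
    have h2 : ∑ j ∈ range n, g j ≤ ∑' k, g k := Summable.sum_le_tsum _ (fun i _ => hgnn i) hgs
    have h3 : s n = u n + ∑ j ∈ range n, v j - ∑ j ∈ range n, g j := rfl
    linarith [hu n]
  refine ⟨⟨(⨅ k, s k) + ∑' k, g k - ∑' k, v k, ?_⟩, hvs⟩
  have hV : Tendsto (fun n => ∑ j ∈ range n, v j) atTop (nhds (∑' k, v k)) :=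
    hvs.hasSum.tendsto_sum_nat
  have := ht.sub hV
  refine this.congr (fun k => by ring)
end

section
/- Let p ∈ (2/3, 1], γ ∈ (0, 2p-1) with γ ≥ 1-p, a > 0. Define α_k = a/k^p and n(k) = k+1-⌈k^γ⌉. Then ∑_{k=2}^∞ α_{k+1} α_{n(k)+1} (⌈k^γ⌉ - 2) < ∞. -/
open Filter Asymptotics Real

/-- Summability of `∑_{k=2}^∞ α_{k+1} α_{n(k)+1} (⌈k^γ⌉ - 2)` where
`α_k = a / k^p` and `n(k) = k + 1 - ⌈k^γ⌉`. -/
theorem summable_delayed_stepsize_product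
    (a β γ p : ℝ) (ha : 0 < a)
    (hp1 : 2 / 3 < p) (hp2 : p ≤ 1)
    (hγ0 : 0 < γ) (hγ1 : γ < 2 * p - 1) (hγp : 1 - p ≤ γ) :
    Summable (fun k : ℕ =>
      (a / (((k : ℝ) + 2) + 1) ^ p) *
        (a / (((k : ℝ) + 2) + 2 - (⌈((k : ℝ) + 2) ^ γ⌉₊ : ℝ)) ^ p) *
        ((⌈((k : ℝ) + 2) ^ γ⌉₊ : ℝ) - 2)) := by
  have hp0 : 0 < p := by linarith
  have hexp : γ - 2 * p < -1 := by linarith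
  have hg : Summable (fun k : ℕ => (k : ℝ) ^ (γ - 2 * p)) :=
    (Real.summable_nat_rpow).mpr hexp
  refine summable_of_isBigO_nat hg ?_
  have htend : Tendsto (fun k : ℕ => ((k : ℝ) + 2) ^ (γ - 1)) atTop (nhds 0) := by
    have h1 : Tendsto (fun k : ℕ => ((k : ℝ) + 2)) atTop atTop :=
      tendsto_atTop_add_const_right _ 2 tendsto_natCast_atTop_atTop
    have := (tendsto_rpow_neg_atTop (by linarith : 0 < 1 - γ)).comp h1
    refine this.congr (fun k => ?_)
    simp only [Function.comp_apply]
    norm_num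
  have hev : ∀ᶠ k : ℕ in atTop, ((k : ℝ) + 2) ^ (γ - 1) ≤ 1 / 2 :=
    htend.eventually (eventually_le_nhds (by norm_num : (0:ℝ) < 1/2))
  rw [isBigO_iff]
  refine ⟨2 ^ p * 2 * a ^ 2, ?_⟩
  filter_upwards [hev, eventually_ge_atTop 1] with k hk hk1
  set K : ℝ := (k : ℝ) + 2 with hKdef
  have hK2 : (2:ℝ) ≤ K := by simp [hKdef]
  have hKpos : (0:ℝ) < K := by linarith
  have hKγpos : (0:ℝ) < K ^ γ := by positivity
  have hKγ1 : (1:ℝ) ≤ K ^ γ := Real.one_le_rpow (by linarith) hγ0.le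
  -- half bound
  have hhalf : K ^ γ ≤ K / 2 := by
    have : K ^ γ = K ^ (γ - 1) * K := by
      rw [← Real.rpow_add_one hKpos.ne']; ring_nf
    rw [this]
    calc K ^ (γ - 1) * K ≤ (1/2) * K := by
          apply mul_le_mul_of_nonneg_right hk hKpos.le
      _ = K / 2 := by ring
  have hceil_lt : (⌈K ^ γ⌉₊ : ℝ) < K ^ γ + 1 := Nat.ceil_lt_add_one hKγpos.le
  have hceil_ge : K ^ γ ≤ (⌈K ^ γ⌉₊ : ℝ) := Nat.le_ceil _
  set D : ℝ := K + 2 - (⌈K ^ γ⌉₊ : ℝ) with hDdef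
  have hD : K / 2 ≤ D := by
    have : (⌈K ^ γ⌉₊ : ℝ) ≤ K / 2 + 1 := by linarith
    simp only [hDdef]; linarith
  have hDpos : 0 < D := lt_of_lt_of_le (by linarith) hD
  have hKp : (0:ℝ) < K ^ p := by positivity
  have h1 : |a / (K + 1) ^ p| ≤ a / K ^ p := by
    rw [abs_of_nonneg (by positivity)]
    apply div_le_div_of_nonneg_left ha.le hKp
    exact Real.rpow_le_rpow hKpos.le (by linarith) hp0.le
  have h2 : |a / D ^ p| ≤ a * 2 ^ p / K ^ p := by
    rw [abs_of_nonneg (by positivity)]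
    have hhalfp : (K / 2) ^ p ≤ D ^ p := Real.rpow_le_rpow (by positivity) hD hp0.le
    have hKhp : (0:ℝ) < (K / 2) ^ p := by positivity
    calc a / D ^ p ≤ a / (K / 2) ^ p :=
          div_le_div_of_nonneg_left ha.le hKhp hhalfp
      _ = a * 2 ^ p / K ^ p := by
          rw [Real.div_rpow hKpos.le (by norm_num : (0:ℝ) ≤ 2)]
          field_simp
  have h3 : |(⌈K ^ γ⌉₊ : ℝ) - 2| ≤ 2 * K ^ γ := by
    rw [abs_le]
    constructor <;> nlinarith
  have hfin : ‖(a / (K + 1) ^ p) * (a / D ^ p) * ((⌈K ^ γ⌉₊ : ℝ) - 2)‖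
      ≤ 2 ^ p * 2 * a ^ 2 * K ^ (γ - 2 * p) := by
    have hb : ‖(a / (K + 1) ^ p) * (a / D ^ p) * ((⌈K ^ γ⌉₊ : ℝ) - 2)‖
        ≤ (a / K ^ p) * (a * 2 ^ p / K ^ p) * (2 * K ^ γ) := by
      rw [norm_mul, norm_mul]
      simp only [Real.norm_eq_abs]
      exact mul_le_mul (mul_le_mul h1 h2 (abs_nonneg _) (by positivity)) h3 (abs_nonneg _)
        (by positivity)
    refine hb.trans (le_of_eq ?_)
    rw [show γ - 2 * p = γ - p - p by ring, Real.rpow_sub hKpos, Real.rpow_sub hKpos]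
    field_simp
  refine hfin.trans ?_
  have hkpos : (0:ℝ) < (k : ℝ) := by exact_mod_cast hk1
  have hmono : K ^ (γ - 2 * p) ≤ (k : ℝ) ^ (γ - 2 * p) := by
    apply Real.rpow_le_rpow_of_nonpos hkpos (by simp [hKdef]) (by linarith)
  have hgn : ‖(k : ℝ) ^ (γ - 2 * p)‖ = (k : ℝ) ^ (γ - 2 * p) := by
    rw [Real.norm_eq_abs, abs_of_nonneg (by positivity)]
  rw [hgn]
  have hC : (0:ℝ) ≤ 2 ^ p * 2 * a ^ 2 := by positivity
  exact mul_le_mul_of_nonneg_left hmono hC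
end

section
/- Let {u_k} be nonnegative random variables adapted to a filtration {F_k}, and {Δ_k} nonnegative F_k-measurable random variables taking values in {0, c} for a constant c > 0, with E[u_{k+1} | F_k] ≤ u_k - Δ_{k+1}. Then with probability 1, Δ_k = 0 for all sufficiently large k. -/
open MeasureTheory

theorem eventually_zero_of_supermartingale_decrement
    {Ω : Type*} {m0 : MeasurableSpace Ω} (μ : Measure Ω) [IsProbabilityMeasure μ]
    (ℱ : Filtration ℕ m0)
    (u Δ : ℕ → Ω → ℝ) (c : ℝ) (hc : 0 < c)
    (hu_nonneg : ∀ k, ∀ ω, 0 ≤ u k ω)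
    (hu_adapted : Adapted ℱ u)
    (hu_int : ∀ k, Integrable (u k) μ)
    (hΔ_adapted : Adapted ℱ Δ)
    (hΔ_vals : ∀ k, ∀ ω, Δ k ω = 0 ∨ Δ k ω = c)
    (hrec : ∀ k, ∀ᵐ ω ∂μ, (μ[u (k + 1) | ℱ k]) ω ≤ u k ω - Δ (k + 1) ω) :
    ∀ᵐ ω ∂μ, ∀ᶠ k in Filter.atTop, Δ k ω = 0 := by
  set A : ℕ → Set Ω := fun k => {ω | Δ k ω = c} with hA
  have hAmeas : ∀ k, MeasurableSet (A k) := by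
    intro k
    have : MeasurableSet[ℱ k] (A k) :=
      ((hΔ_adapted k) (measurableSet_singleton c))
    exact ℱ.le k _ this
  have hΔeq : ∀ k, Δ k = (A k).indicator (fun _ => c) := by
    intro k
    funext ω
    rcases hΔ_vals k ω with h | h
    · rw [Set.indicator_of_notMem]
      · exact h
      · intro hm
        rw [Set.mem_setOf_eq] at hm
        rw [hm] at h; exact hc.ne' h
    · rw [Set.indicator_of_mem (show ω ∈ A k from h)]; exact h
  have hΔint : ∀ k, Integrable (Δ k) μ := by
    intro k
    rw [hΔeq k]
    exact (integrable_const c).indicator (hAmeas k)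
  have hΔintval : ∀ k, ∫ ω, Δ k ω ∂μ = c * (μ (A k)).toReal := by
    intro k
    rw [hΔeq k, integral_indicator_const c (hAmeas k), smul_eq_mul, mul_comm]; rfl
  set f : ℕ → ℝ := fun k => (μ (A k)).toReal with hf
  have hfnn : ∀ k, 0 ≤ f k := fun k => ENNReal.toReal_nonneg
  -- key step: c * f (k+1) ≤ ∫ u k - ∫ u (k+1)
  have key : ∀ k, c * f (k + 1) ≤ (∫ ω, u k ω ∂μ) - ∫ ω, u (k + 1) ω ∂μ := by
    intro k
    have h1 : ∫ ω, (μ[u (k + 1) | ℱ k]) ω ∂μ = ∫ ω, u (k + 1) ω ∂μ :=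
      integral_condExp (ℱ.le k)
    have h2 : ∫ ω, (μ[u (k + 1) | ℱ k]) ω ∂μ ≤ ∫ ω, (u k ω - Δ (k + 1) ω) ∂μ :=
      integral_mono_ae integrable_condExp ((hu_int k).sub (hΔint (k + 1))) (hrec k)
    rw [integral_sub (hu_int k) (hΔint (k + 1)), h1, hΔintval (k + 1)] at h2
    linarith
  have hbound : ∀ n, ∑ i ∈ Finset.range n, f i ≤ f 0 + (∫ ω, u 0 ω ∂μ) / c := by
    intro n
    have mono : ∑ i ∈ Finset.range n, f i ≤ ∑ i ∈ Finset.range (n + 1), f i := by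
      apply Finset.sum_le_sum_of_subset_of_nonneg
      · exact Finset.range_subset_range.2 (Nat.le_succ n)
      · intro i _ _; exact hfnn i
    refine mono.trans ?_
    rw [Finset.sum_range_succ']
    have htel : ∑ i ∈ Finset.range n, f (i + 1) ≤ (∫ ω, u 0 ω ∂μ) / c := by
      rw [le_div_iff₀ hc, Finset.sum_mul]
      have h1 : ∑ i ∈ Finset.range n, f (i + 1) * c
          ≤ ∑ i ∈ Finset.range n, ((∫ ω, u i ω ∂μ) - ∫ ω, u (i + 1) ω ∂μ) := by
        apply Finset.sum_le_sum
        intro i _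
        have := key i
        linarith
      have h2 : ∑ i ∈ Finset.range n, ((∫ ω, u i ω ∂μ) - ∫ ω, u (i + 1) ω ∂μ)
          = (∫ ω, u 0 ω ∂μ) - ∫ ω, u n ω ∂μ := by
        have := Finset.sum_range_sub' (fun i => ∫ ω, u i ω ∂μ) n
        simpa using this
      have h3 : 0 ≤ ∫ ω, u n ω ∂μ := integral_nonneg (hu_nonneg n)
      linarith
    linarith
  have hsummable : Summable f :=
    summable_of_sum_range_le hfnn hbound
  have htsum : (∑' k, μ (A k)) ≠ ⊤ := by
    have hfin : ∀ k, μ (A k) = ENNReal.ofReal (f k) := by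
      intro k
      rw [hf]
      exact (ENNReal.ofReal_toReal (measure_ne_top μ (A k))).symm
    calc (∑' k, μ (A k)) = ∑' k, ENNReal.ofReal (f k) := by
          exact tsum_congr hfin
      _ = ENNReal.ofReal (∑' k, f k) :=
          (ENNReal.ofReal_tsum_of_nonneg hfnn hsummable).symm
      _ ≠ ⊤ := ENNReal.ofReal_ne_top
  filter_upwards [ae_eventually_notMem htsum] with ω hω
  filter_upwards [hω] with k hk
  rcases hΔ_vals k ω with h | h
  · exact h
  · exact absurd h hk
end
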